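/- Let Ψ^t(ε) = ½‖(√C ε)^t‖² be the crack-driving energy of the anisotropic volumetric–deviatoric model, where (·)^t is the volumetric–deviatoric crack-driving split in the transformed space. Then at every ε₀ ∈ E with tr(√C ε₀) > 0, Ψ^t is differentiable with derivative h ↦ ⟨C ε₀, h⟩ (so the crack-driving stress is σ^t = C ε₀ = C ε^t(ε₀)), and at every ε₀ with tr(√C ε₀) < 0, Ψ^t is differentiable with derivative h ↦ ⟨C ε^t(ε₀), h⟩ where ε^t(ε₀) = (√C)⁻¹ dev(√C ε₀). -/

import Mathlib

open RealInnerProductSpace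

lemma quad_hasFDerivAt {E : Type*} [NormedAddCommGroup E] [InnerProductSpace ℝ E]
    (L : E →L[ℝ] E) (x₀ : E) :
    HasFDerivAt (fun x => 1 / 2 * ⟪L x, L x⟫) ((innerSL ℝ (L x₀)).comp L) x₀ := by
  have h := ((L.hasFDerivAt (x := x₀)).inner ℝ (L.hasFDerivAt (x := x₀))).const_mul (1/2 : ℝ)
  refine h.congr_fderiv ?_
  ext v
  simp [real_inner_comm (L v) (L x₀)]
  ring

/-- Let `Ψt(ε) = ½‖(√C ε)^t‖²` be the crack-driving energy of the anisotropic
volumetric–deviatoric model, where `(·)^t` is the volumetric–deviatoric crack-driving split in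
the transformed space. Then at every `ε₀` with `tr(√C ε₀) > 0`, `Ψt` is differentiable with
derivative `h ↦ ⟨C ε₀, h⟩` (so the crack-driving stress is `σt = C ε₀ = C εt(ε₀)`), and at
every `ε₀` with `tr(√C ε₀) < 0`, `Ψt` is differentiable with derivative `h ↦ ⟨C εt(ε₀), h⟩`
where `εt(ε₀) = (√C)⁻¹ dev(√C ε₀)`.

Here `E` models the space of real symmetric `n × n` matrices with the Frobenius inner product:
`I ∈ E` plays the role of the identity matrix (`⟨I, I⟩ = n`), the trace is `tr x = ⟨I, x⟩`,
`dev x = x - (tr x / n) • I`, and the crack-driving split is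
`x^t = (1/n) max (tr x) 0 • I + dev x`. `B` is the positive self-adjoint square root of the
self-adjoint positive-definite elasticity tensor `C`, with inverse `Binv`. -/
theorem crack_driving_energy_hasFDerivAt
    {E : Type*} [NormedAddCommGroup E] [InnerProductSpace ℝ E] [FiniteDimensional ℝ E]
    (n : ℕ) (hn : 1 ≤ n) (I : E) (hI : ⟪I, I⟫ = (n : ℝ))
    (C B Binv : E →ₗ[ℝ] E)
    (hC_sym : ∀ x y : E, ⟪C x, y⟫ = ⟪x, C y⟫)
    (hC_pos : ∀ x : E, x ≠ 0 → 0 < ⟪C x, x⟫)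
    (hB_sym : ∀ x y : E, ⟪B x, y⟫ = ⟪x, B y⟫)
    (hB_pos : ∀ x : E, x ≠ 0 → 0 < ⟪B x, x⟫)
    (hB_sq : ∀ x : E, B (B x) = C x)
    (hBinv₁ : ∀ x : E, Binv (B x) = x) (hBinv₂ : ∀ x : E, B (Binv x) = x)
    (tr : E → ℝ) (htr : ∀ x : E, tr x = ⟪I, x⟫)
    (dev : E → E) (hdev : ∀ x : E, dev x = x - (tr x / (n : ℝ)) • I)
    (split : E → E) (hsplit : ∀ x : E, split x = (max (tr x) 0 / (n : ℝ)) • I + dev x)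
    (Ψt : E → ℝ) (hΨt : ∀ ε : E, Ψt ε = 1 / 2 * ⟪split (B ε), split (B ε)⟫) :
    (∀ ε₀ : E, 0 < tr (B ε₀) →
        HasFDerivAt Ψt (innerSL ℝ (C ε₀) : E →L[ℝ] ℝ) ε₀) ∧
      (∀ ε₀ : E, tr (B ε₀) < 0 →
        HasFDerivAt Ψt (innerSL ℝ (C (Binv (dev (B ε₀)))) : E →L[ℝ] ℝ) ε₀) := by
  have hn' : (n : ℝ) ≠ 0 := Nat.cast_ne_zero.mpr (by omega)
  set Bc : E →L[ℝ] E := LinearMap.toContinuousLinearMap B with hBc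
  have hBcx : ∀ x : E, Bc x = B x := fun _ => rfl
  have hcont : Continuous fun ε : E => tr (B ε) := by
    have := ((innerSL ℝ I).comp Bc).continuous
    convert this using 1
    funext ε
    simp [htr, hBcx]
  -- deviatoric projection as a continuous linear map
  set D : E →L[ℝ] E :=
    ContinuousLinearMap.id ℝ E - ((n : ℝ)⁻¹) • ((innerSL ℝ I).smulRight I) with hDdef
  have hD : ∀ x : E, D x = dev x := by
    intro x
    simp [hDdef, hdev, htr, smul_smul, div_eq_inv_mul]
  constructor
  · intro ε₀ h₀
    have key : Ψt =ᶠ[nhds ε₀] fun ε => 1 / 2 * ⟪Bc ε, Bc ε⟫ := by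
      filter_upwards [(isOpen_lt continuous_const hcont).mem_nhds h₀] with ε hε
      have hs : split (B ε) = B ε := by
        rw [hsplit, hdev, max_eq_left hε.le]
        abel
      rw [hΨt, hs]
      rfl
    have hd := (quad_hasFDerivAt Bc ε₀).congr_of_eventuallyEq key
    have heq : (innerSL ℝ (C ε₀) : E →L[ℝ] ℝ) = (innerSL ℝ (Bc ε₀)).comp Bc := by
      ext v
      simp only [ContinuousLinearMap.coe_comp', Function.comp_apply, innerSL_apply_apply, hBcx]
      rw [← hB_sq, hB_sym]
    rw [heq]
    exact hd
  · intro ε₀ h₀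
    set L : E →L[ℝ] E := D.comp Bc with hL
    have hLx : ∀ x : E, L x = dev (B x) := by intro x; simp [hL, hD, hBcx]
    have key : Ψt =ᶠ[nhds ε₀] fun ε => 1 / 2 * ⟪L ε, L ε⟫ := by
      filter_upwards [(isOpen_lt hcont continuous_const).mem_nhds h₀] with ε hε
      have hs : split (B ε) = L ε := by
        rw [hsplit, max_eq_right hε.le, hLx]
        simp
      rw [hΨt, hs]
    have hd := (quad_hasFDerivAt L ε₀).congr_of_eventuallyEq key
    have hdevI : ∀ x : E, ⟪dev x, I⟫ = 0 := by
      intro x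
      rw [hdev, inner_sub_left, real_inner_smul_left, hI, real_inner_comm, ← htr]
      field_simp
      ring
    have hdevdev : ∀ x y : E, ⟪dev x, dev y⟫ = ⟪dev x, y⟫ := by
      intro x y
      rw [hdev y, inner_sub_right, real_inner_smul_right, hdevI, mul_zero, sub_zero]
    have heq : (innerSL ℝ (C (Binv (dev (B ε₀)))) : E →L[ℝ] ℝ) = (innerSL ℝ (L ε₀)).comp L := by
      ext v
      simp only [ContinuousLinearMap.coe_comp', Function.comp_apply, innerSL_apply_apply, hLx]
      rw [hdevdev, ← hB_sq (Binv (dev (B ε₀))), hBinv₂, hB_sym]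
    rw [heq]
    exact hd
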